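/- Let n ≥ 1, 0 < λ ≤ Λ, and τ > 0. Let f : ℝⁿ → ℝ be continuous, ℤⁿ-periodic, and nonnegative, and let u ∈ C²(ℝⁿ) be ℤⁿ-periodic with τ u(x) − 𝒫⁻(D²u(x)) = f(x) for all x ∈ ℝⁿ. Then τ ∫_{[0,1)ⁿ} |u(x)| dx + ((Λ−λ)/2) ∫_{[0,1)ⁿ} |D²u(x)| dx = ∫_{[0,1)ⁿ} f(x) dx. -/

import Mathlib

open MeasureTheory Metric Set ENNReal RealInnerProductSpace

noncomputable section

/-- The Pucci maximal operator `𝒫⁺`: for a symmetric matrix with eigenvalues `μᵢ`,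
`𝒫⁺(M) = Λ ∑ max(μᵢ,0) − λ ∑ max(−μᵢ,0)` (junk value `0` on non-symmetric matrices). -/
def pucciSup {n : ℕ} (lam Lam : ℝ) (M : Matrix (Fin n) (Fin n) ℝ) : ℝ :=
  if h : M.IsHermitian then
    Lam * ∑ i, max (h.eigenvalues i) 0 - lam * ∑ i, max (-h.eigenvalues i) 0
  else 0

/-- The Pucci minimal operator `𝒫⁻`: for a symmetric matrix with eigenvalues `μᵢ`,
`𝒫⁻(M) = λ ∑ max(μᵢ,0) − Λ ∑ max(−μᵢ,0)` (junk value `0` on non-symmetric matrices). -/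
def pucciInf {n : ℕ} (lam Lam : ℝ) (M : Matrix (Fin n) (Fin n) ℝ) : ℝ :=
  if h : M.IsHermitian then
    lam * ∑ i, max (h.eigenvalues i) 0 - Lam * ∑ i, max (-h.eigenvalues i) 0
  else 0

/-- `|M|`: the sum of the absolute values of the eigenvalues of a symmetric matrix
(junk value `0` on non-symmetric matrices). -/
def matAbs {n : ℕ} (M : Matrix (Fin n) (Fin n) ℝ) : ℝ :=
  if h : M.IsHermitian then ∑ i, |h.eigenvalues i| else 0

/-- The Hessian matrix `D²u(x)` of second-order partial derivatives. -/
def hess {n : ℕ} (u : EuclideanSpace ℝ (Fin n) → ℝ) (x : EuclideanSpace ℝ (Fin n)) :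
    Matrix (Fin n) (Fin n) ℝ :=
  fun i j =>
    fderiv ℝ (fun y => fderiv ℝ u y (EuclideanSpace.single j 1)) x (EuclideanSpace.single i 1)

/-- `Q_r`: the open cube of side length `r` centered at the origin. -/
def cube (n : ℕ) (r : ℝ) : Set (EuclideanSpace ℝ (Fin n)) := {x | ∀ i, |x i| < r / 2}

/-- `ℝ≥0∞`-valued `L_p` quasinorm `(∫_E |g|^p)^{1/p}` w.r.t. Lebesgue measure. -/
def lpE {α : Type*} [MeasureSpace α] (p : ℝ) (E : Set α) (g : α → ℝ) : ℝ≥0∞ :=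
  (∫⁻ z in E, ENNReal.ofReal (|g z| ^ p)) ^ (1 / p)

/-- The fundamental domain `[0,1)ⁿ` of the torus `𝕋ⁿ = ℝⁿ/ℤⁿ`. -/
def fund (n : ℕ) : Set (EuclideanSpace ℝ (Fin n)) := {x | ∀ i, x i ∈ Ico (0:ℝ) 1}

/-- `ℤⁿ`-periodicity. -/
def ZPeriodic {n : ℕ} (g : EuclideanSpace ℝ (Fin n) → ℝ) : Prop :=
  ∀ (x : EuclideanSpace ℝ (Fin n)) (y : Fin n → ℤ),
    g (x + (WithLp.equiv 2 (Fin n → ℝ)).symm fun i => (y i : ℝ)) = g x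

section Stmt16Aux
open Matrix

variable {n : ℕ} {u : EuclideanSpace ℝ (Fin n) → ℝ}

theorem hasFDerivAt_pd (hu : ContDiff ℝ 2 u) (v : EuclideanSpace ℝ (Fin n))
    (x : EuclideanSpace ℝ (Fin n)) :
    HasFDerivAt (fun y => fderiv ℝ u y v) ((fderiv ℝ (fderiv ℝ u) x).flip v) x := by
  have hd : DifferentiableAt ℝ (fderiv ℝ u) x :=
    ((hu.fderiv_right (m := 1) (le_refl _)).differentiable (by norm_num)).differentiableAt
  have := hd.hasFDerivAt.clm_apply (hasFDerivAt_const v x)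
  simpa using this

theorem hess_apply (hu : ContDiff ℝ 2 u) (x : EuclideanSpace ℝ (Fin n)) (i j : Fin n) :
    hess u x i j =
      fderiv ℝ (fderiv ℝ u) x (EuclideanSpace.single i 1) (EuclideanSpace.single j 1) := by
  rw [hess, (hasFDerivAt_pd hu (EuclideanSpace.single j 1) x).fderiv]
  rfl

theorem hess_isHermitian (hu : ContDiff ℝ 2 u) (x : EuclideanSpace ℝ (Fin n)) :
    (hess u x).IsHermitian := by
  have hsymm := (hu.contDiffAt (x := x)).isSymmSndFDerivAt (by norm_num)
  ext i j
  simp only [Matrix.conjTranspose_apply, star_trivial, hess_apply hu]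
  exact hsymm _ _

theorem trace_eq_sum_eigenvalues {M : Matrix (Fin n) (Fin n) ℝ} (h : M.IsHermitian) :
    M.trace = ∑ i, h.eigenvalues i := by
  conv_lhs => rw [h.spectral_theorem]
  rw [Unitary.conjStarAlgAut_apply, Matrix.trace_mul_cycle]
  have h1 : (star (h.eigenvectorUnitary : Matrix (Fin n) (Fin n) ℝ)) *
      (h.eigenvectorUnitary : Matrix (Fin n) (Fin n) ℝ) = 1 := h.eigenvectorUnitary.prop.1
  rw [h1, one_mul, Matrix.trace_diagonal]
  simp

theorem pucciInf_eq {lam Lam : ℝ} {M : Matrix (Fin n) (Fin n) ℝ} (h : M.IsHermitian) :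
    pucciInf lam Lam M = (lam + Lam) / 2 * M.trace - (Lam - lam) / 2 * matAbs M := by
  rw [pucciInf, matAbs, dif_pos h, dif_pos h, trace_eq_sum_eigenvalues h,
    Finset.mul_sum, Finset.mul_sum, Finset.mul_sum, Finset.mul_sum,
    ← Finset.sum_sub_distrib, ← Finset.sum_sub_distrib]
  refine Finset.sum_congr rfl fun i _ => ?_
  rcases le_or_gt 0 (h.eigenvalues i) with hi | hi
  · rw [max_eq_left hi, max_eq_right (by linarith), abs_of_nonneg hi]; ring
  · rw [max_eq_right hi.le, max_eq_left (by linarith), abs_of_neg hi]; ring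

theorem eigenvalues_nonneg {M : Matrix (Fin n) (Fin n) ℝ} (h : M.IsHermitian)
    (hM : ∀ v : Fin n → ℝ, 0 ≤ v ⬝ᵥ M.mulVec v) (i : Fin n) : 0 ≤ h.eigenvalues i := by
  set v : Fin n → ℝ := ⇑(h.eigenvectorBasis i) with hv
  have h1 : M.mulVec v = h.eigenvalues i • v := by
    simpa using h.mulVec_eigenvectorBasis i
  have h2 : v ⬝ᵥ v = 1 := by
    have hn : ‖h.eigenvectorBasis i‖ = 1 := h.eigenvectorBasis.orthonormal.1 i
    have : ⟪h.eigenvectorBasis i, h.eigenvectorBasis i⟫ = 1 := by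
      rw [real_inner_self_eq_norm_sq, hn]; norm_num
    rw [← this, PiLp.inner_apply]
    simp [dotProduct, v, mul_comm, sq]
  have h3 := hM v
  rw [h1, dotProduct_smul, smul_eq_mul, h2, mul_one] at h3
  exact h3

theorem snd_nonneg_of_min (hu : ContDiff ℝ 2 u) {x₀ : EuclideanSpace ℝ (Fin n)}
    (hmin : ∀ y, u x₀ ≤ u y) (v : EuclideanSpace ℝ (Fin n)) :
    0 ≤ fderiv ℝ (fderiv ℝ u) x₀ v v := by
  set L : ℝ → EuclideanSpace ℝ (Fin n) := fun t => x₀ + t • v with hL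
  have hL0 : L 0 = x₀ := by simp [hL]
  have hLd : ∀ t : ℝ, HasDerivAt L v t := by
    intro t
    have h1 : HasDerivAt (fun t : ℝ => t • v) ((1:ℝ) • v) t := (hasDerivAt_id t).smul_const v
    simpa [hL] using h1.const_add x₀
  set g : ℝ → ℝ := fun t => fderiv ℝ u (L t) v with hg
  have hφd : ∀ t : ℝ, HasDerivAt (fun s => u (L s)) (g t) t := fun t =>
    ((hu.differentiable (by norm_num) (L t)).hasFDerivAt).comp_hasDerivAt t (hLd t)
  have hgd : ∀ t : ℝ, HasDerivAt g (fderiv ℝ (fderiv ℝ u) (L t) v v) t := fun t =>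
    (hasFDerivAt_pd hu v (L t)).comp_hasDerivAt t (hLd t)
  by_contra hneg
  push_neg at hneg
  -- continuity of the second derivative along the line
  have hcont : Continuous fun t => fderiv ℝ (fderiv ℝ u) (L t) v v := by
    have hD2 : Continuous (fderiv ℝ (fderiv ℝ u)) :=
      (hu.fderiv_right (m := 1) le_rfl).continuous_fderiv (by norm_num)
    have hLc : Continuous L := by fun_prop
    exact (((hD2.comp hLc).clm_apply continuous_const).clm_apply continuous_const)
  have hev : ∀ᶠ t in nhds (0:ℝ), fderiv ℝ (fderiv ℝ u) (L t) v v < 0 := by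
    have h0 : fderiv ℝ (fderiv ℝ u) (L 0) v v < 0 := by rwa [hL0]
    exact (hcont.continuousAt (x := (0:ℝ))).eventually_lt continuousAt_const h0
  rcases Metric.eventually_nhds_iff.1 hev with ⟨δ, hδ, hδ'⟩
  have hδ2 : 0 < δ / 2 := by linarith
  have hIoo : ∀ t ∈ Ioo (0:ℝ) (δ/2), deriv g t < 0 := by
    intro t ht
    rw [(hgd t).deriv]
    apply hδ'
    simp only [Real.dist_eq, sub_zero]
    rw [abs_of_pos ht.1]; linarith [ht.2]
  have hganti : StrictAntiOn g (Icc 0 (δ/2)) := by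
    apply strictAntiOn_of_deriv_neg (convex_Icc _ _)
      (fun t _ => (hgd t).continuousAt.continuousWithinAt)
    rwa [interior_Icc]
  have hg0 : g 0 = 0 := by
    have hmin' : IsLocalMin u x₀ := (isMinOn_univ_iff.2 hmin).isLocalMin Filter.univ_mem
    have : fderiv ℝ u x₀ = 0 := hmin'.fderiv_eq_zero
    simp [hg, hL0, this]
  have hgneg : ∀ t ∈ Ioo (0:ℝ) (δ/2), deriv (fun s => u (L s)) t < 0 := by
    intro t ht
    rw [(hφd t).deriv, ← hg0]
    exact hganti ⟨le_refl _, by linarith [hδ2]⟩ ⟨ht.1.le, ht.2.le⟩ ht.1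
  have hφanti : StrictAntiOn (fun s => u (L s)) (Icc 0 (δ/2)) := by
    apply strictAntiOn_of_deriv_neg (convex_Icc _ _)
      (fun t _ => (hφd t).continuousAt.continuousWithinAt)
    rwa [interior_Icc]
  have h2 := hφanti (left_mem_Icc.2 hδ2.le) (right_mem_Icc.2 hδ2.le) hδ2
  simp only [hL0] at h2
  exact absurd (hmin (L (δ/2))) (not_le.2 h2)

theorem single_repr (v : Fin n → ℝ) :
    (WithLp.equiv 2 (Fin n → ℝ)).symm v = ∑ i, (v i) • EuclideanSpace.single i (1:ℝ) := by
  ext j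
  rw [WithLp.equiv_symm_apply, PiLp.toLp_apply]
  rw [show (∑ i, (v i) • EuclideanSpace.single i (1:ℝ)) j
      = ∑ i, ((v i) • EuclideanSpace.single i (1:ℝ)) j from by rw [WithLp.ofLp_sum]; exact Finset.sum_apply _ _ _]
  simp [EuclideanSpace.single_apply]

theorem quadform_eq (hu : ContDiff ℝ 2 u) (x : EuclideanSpace ℝ (Fin n)) (v : Fin n → ℝ) :
    v ⬝ᵥ (hess u x).mulVec v =
      fderiv ℝ (fderiv ℝ u) x ((WithLp.equiv 2 (Fin n → ℝ)).symm v)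
        ((WithLp.equiv 2 (Fin n → ℝ)).symm v) := by
  rw [single_repr, map_sum]
  simp only [_root_.map_smul, ContinuousLinearMap.coe_sum', ContinuousLinearMap.coe_smul',
    Finset.sum_apply, Pi.smul_apply, map_sum, smul_eq_mul]
  have hs := (hu.contDiffAt (x := x)).isSymmSndFDerivAt (by norm_num)
  simp only [dotProduct, Matrix.mulVec, hess_apply hu]
  refine Finset.sum_congr rfl fun i _ => ?_
  congr 1
  refine Finset.sum_congr rfl fun j _ => ?_
  rw [hs (EuclideanSpace.single j 1) (EuclideanSpace.single i 1)]
  ring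

theorem exists_rep_in_ball (hn : 1 ≤ n) (g : EuclideanSpace ℝ (Fin n) → ℝ) (hg : ZPeriodic g)
    (x : EuclideanSpace ℝ (Fin n)) :
    ∃ y ∈ Metric.closedBall (0 : EuclideanSpace ℝ (Fin n)) n, g y = g x := by
  set y : EuclideanSpace ℝ (Fin n) :=
    x + (WithLp.equiv 2 (Fin n → ℝ)).symm (fun i => ((-⌊x i⌋ : ℤ) : ℝ)) with hy
  have hyi : ∀ i, y i = Int.fract (x i) := by
    intro i
    rw [hy]
    show x i + _ = _
    rw [Int.fract]; show x i + ((-⌊x i⌋ : ℤ) : ℝ) = _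
    push_cast
    ring
  refine ⟨y, ?_, hg x _⟩
  rw [Metric.mem_closedBall, dist_zero_right, EuclideanSpace.norm_eq]
  have h1 : ∑ i, ‖y i‖ ^ 2 ≤ (n : ℝ) := by
    calc ∑ i, ‖y i‖ ^ 2 ≤ ∑ _i : Fin n, (1:ℝ) := by
          refine Finset.sum_le_sum fun i _ => ?_
          rw [hyi i, Real.norm_eq_abs, abs_of_nonneg (Int.fract_nonneg _), sq]
          nlinarith [Int.fract_nonneg (x i), Int.fract_lt_one (x i)]
      _ = n := by simp
  calc Real.sqrt (∑ i, ‖y i‖ ^ 2) ≤ Real.sqrt n := Real.sqrt_le_sqrt h1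
    _ ≤ n := by
        rw [Real.sqrt_le_left (by positivity)]
        have : (1:ℝ) ≤ n := by exact_mod_cast hn
        nlinarith

theorem u_nonneg (hn : 1 ≤ n) {lam Lam τ : ℝ} (hlam : 0 < lam) (hτ : 0 < τ)
    {f : EuclideanSpace ℝ (Fin n) → ℝ} (hf0 : ∀ x, 0 ≤ f x)
    (hu : ContDiff ℝ 2 u) (hup : ZPeriodic u)
    (heq : ∀ x, τ * u x - pucciInf lam Lam (hess u x) = f x) (x : EuclideanSpace ℝ (Fin n)) :
    0 ≤ u x := by
  obtain ⟨x₀, hx₀K, hminK⟩ := (isCompact_closedBall (0 : EuclideanSpace ℝ (Fin n)) n).exists_isMinOn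
    ⟨0, Metric.mem_closedBall_self (by positivity)⟩ hu.continuous.continuousOn
  have hmin : ∀ y, u x₀ ≤ u y := by
    intro y
    obtain ⟨z, hz, hzy⟩ := exists_rep_in_ball hn u hup y
    rw [← hzy]
    exact hminK hz
  have hH := hess_isHermitian hu x₀
  have heig : ∀ i, 0 ≤ hH.eigenvalues i := by
    refine eigenvalues_nonneg hH (fun v => ?_)
    rw [quadform_eq hu]
    exact snd_nonneg_of_min hu hmin _
  have hP : 0 ≤ pucciInf lam Lam (hess u x₀) := by
    rw [pucciInf, dif_pos hH]
    have h1 : ∑ i, max (-hH.eigenvalues i) 0 = 0 :=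
      Finset.sum_eq_zero fun i _ => max_eq_right (by linarith [heig i])
    have h2 : 0 ≤ ∑ i, max (hH.eigenvalues i) 0 :=
      Finset.sum_nonneg fun i _ => le_max_right _ _
    rw [h1]
    nlinarith
  have h0 : 0 ≤ u x₀ := by
    have := heq x₀
    nlinarith [hf0 x₀]
  linarith [hmin x]

theorem fderiv_periodic (hu : ContDiff ℝ 2 u) (hup : ZPeriodic u)
    (x : EuclideanSpace ℝ (Fin n)) (c : Fin n → ℤ) :
    fderiv ℝ u (x + (WithLp.equiv 2 (Fin n → ℝ)).symm fun i => (c i : ℝ)) = fderiv ℝ u x := by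
  set w : EuclideanSpace ℝ (Fin n) := (WithLp.equiv 2 (Fin n → ℝ)).symm fun i => (c i : ℝ)
  have hcomp : (fun z => u (z + w)) = u := funext fun z => hup z c
  have ht : HasFDerivAt (fun z : EuclideanSpace ℝ (Fin n) => z + w)
      (ContinuousLinearMap.id ℝ _) x := by
    simpa using (hasFDerivAt_id x).add_const w
  have h1 : HasFDerivAt (fun z => u (z + w)) (fderiv ℝ u (x + w)) x := by
    have := ((hu.differentiable (by norm_num) (x + w)).hasFDerivAt).comp x ht
    exact this
  rw [← h1.fderiv, hcomp]

theorem integral_trace_zero' {m : ℕ} {U : EuclideanSpace ℝ (Fin (m+1)) → ℝ}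
    (hu : ContDiff ℝ 2 U) (hup : ZPeriodic U) :
    ∫ x in fund (m+1), ∑ i, fderiv ℝ (fderiv ℝ U) x
      (EuclideanSpace.single i 1) (EuclideanSpace.single i 1) = 0 := by
  set φ : (Fin (m+1) → ℝ) → EuclideanSpace ℝ (Fin (m+1)) := ⇑(WithLp.equiv 2 (Fin (m+1) → ℝ)).symm with hφ
  have hφmp : MeasurePreserving φ volume volume :=
    (EuclideanSpace.volume_preserving_symm_measurableEquiv_toLp (Fin (m+1))).symm
  have hφemb : MeasurableEmbedding φ :=
    (MeasurableEquiv.toLp 2 (Fin (m+1) → ℝ)).measurableEmbedding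
  have hφcont : Continuous φ := (EuclideanSpace.equiv (Fin (m+1)) ℝ).symm.continuous
  set T : EuclideanSpace ℝ (Fin (m+1)) → ℝ := fun x => ∑ i, fderiv ℝ (fderiv ℝ U) x
      (EuclideanSpace.single i 1) (EuclideanSpace.single i 1) with hT
  have hTc : Continuous T := by
    have hD2 : Continuous (fderiv ℝ (fderiv ℝ U)) :=
      (hu.fderiv_right (m := 1) le_rfl).continuous_fderiv (by norm_num)
    exact continuous_finset_sum _ fun i _ =>
      (hD2.clm_apply continuous_const).clm_apply continuous_const
  -- transfer to the pi space
  have step1 : ∫ x in fund (m+1), T x = ∫ p in Icc (0 : Fin (m+1) → ℝ) 1, T (φ p) := by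
    rw [← hφmp.setIntegral_preimage_emb hφemb]
    have hpre : φ ⁻¹' fund (m+1) = Set.univ.pi fun _ => Ico (0:ℝ) 1 := by
      ext p
      simp only [mem_preimage, fund, mem_setOf_eq, mem_pi, mem_univ, forall_true_left]
      rfl
    rw [hpre]
    rw [show (volume : Measure (Fin (m+1) → ℝ)) = Measure.pi fun _ => volume from volume_pi]
    exact setIntegral_congr_set Measure.univ_pi_Ico_ae_eq_Icc
  rw [step1]
  -- divergence theorem
  set v : Fin (m+1) → EuclideanSpace ℝ (Fin (m+1)) := fun i => EuclideanSpace.single i 1 with hv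
  set ψL : (Fin (m+1) → ℝ) →L[ℝ] EuclideanSpace ℝ (Fin (m+1)) :=
    ((EuclideanSpace.equiv (Fin (m+1)) ℝ).symm : (Fin (m+1) → ℝ) ≃L[ℝ] _).toContinuousLinearMap with hψL
  set F : Fin (m+1) → (Fin (m+1) → ℝ) → ℝ := fun i p => fderiv ℝ U (φ p) (v i) with hF
  set F' : Fin (m+1) → (Fin (m+1) → ℝ) → (Fin (m+1) → ℝ) →L[ℝ] ℝ := fun i p =>
    ((fderiv ℝ (fderiv ℝ U) (φ p)).flip (v i)).comp ψL with hF'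
  have hFc : ∀ i, Continuous (F i) := by
    intro i
    have h1 : Continuous (fderiv ℝ U) := hu.continuous_fderiv (by norm_num)
    exact ((h1.comp hφcont).clm_apply continuous_const)
  have hFd : ∀ (p : Fin (m+1) → ℝ) i, HasFDerivAt (F i) (F' i p) p := by
    intro p i
    exact (hasFDerivAt_pd hu (v i) (φ p)).comp p (ψL.hasFDerivAt)
  have hdiv : ∀ p : Fin (m+1) → ℝ, (∑ i, F' i p (Pi.single i 1)) = T (φ p) := by
    intro p
    refine Finset.sum_congr rfl fun i _ => ?_
    have : ψL (Pi.single i 1) = v i := rfl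
    simp [hF', ContinuousLinearMap.comp_apply, this, hv]
  have hInt : IntegrableOn (fun p => ∑ i, F' i p (Pi.single i 1)) (Icc (0 : Fin (m+1) → ℝ) 1) := by
    have : Continuous fun p => ∑ i, F' i p (Pi.single i 1) := by
      simp only [funext hdiv]
      exact hTc.comp hφcont
    exact this.continuousOn.integrableOn_compact isCompact_Icc
  have hdivthm := MeasureTheory.integral_divergence_of_hasFDerivAt_off_countable'
    (0 : Fin (m+1) → ℝ) 1 (by intro i; norm_num) F F' ∅ countable_empty
    (fun i => (hFc i).continuousOn) (fun p _ i => hFd p i) hInt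
  -- boundary terms vanish
  have hbd : ∀ (i : Fin (m+1)) (x : Fin m → ℝ),
      F i (i.insertNth ((1 : Fin (m+1) → ℝ) i) x) = F i (i.insertNth ((0 : Fin (m+1) → ℝ) i) x) := by
    intro i x
    have hins : i.insertNth ((1 : Fin (m+1) → ℝ) i) x
        = i.insertNth ((0 : Fin (m+1) → ℝ) i) x + fun j => ((Pi.single i 1 : Fin (m+1) → ℤ) j : ℝ) := by
      funext j
      rcases eq_or_ne j i with rfl | hj
      · simp
      · obtain ⟨k, rfl⟩ := Fin.exists_succAbove_eq hj
        simp [Fin.insertNth_apply_succAbove, Pi.single_eq_of_ne (Fin.succAbove_ne i k)]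
    have hper : ∀ (z : EuclideanSpace ℝ (Fin (m+1))),
        fderiv ℝ U (z + (WithLp.equiv 2 (Fin (m+1) → ℝ)).symm
          (fun j => ((Pi.single i 1 : Fin (m+1) → ℤ) j : ℝ))) = fderiv ℝ U z :=
      fun z => fderiv_periodic hu hup z (Pi.single i 1)
    show fderiv ℝ U (φ _) (v i) = fderiv ℝ U (φ _) (v i)
    rw [hins]
    have : φ (i.insertNth ((0 : Fin (m+1) → ℝ) i) x + fun j => ((Pi.single i 1 : Fin (m+1) → ℤ) j : ℝ))
        = φ (i.insertNth ((0 : Fin (m+1) → ℝ) i) x) + (WithLp.equiv 2 (Fin (m+1) → ℝ)).symm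
          (fun j => ((Pi.single i 1 : Fin (m+1) → ℤ) j : ℝ)) := rfl
    rw [this, hper]
  rw [show (∫ p in Icc (0 : Fin (m+1) → ℝ) 1, T (φ p))
      = ∫ p in Icc (0 : Fin (m+1) → ℝ) 1, ∑ i, F' i p (Pi.single i 1) from
    setIntegral_congr_fun measurableSet_Icc fun p _ => (hdiv p).symm]
  rw [hdivthm]
  refine Finset.sum_eq_zero fun i _ => ?_
  rw [sub_eq_zero]
  exact setIntegral_congr_fun ((measurableSet_Icc)) (fun x _ => hbd i x) ▸ rfl

theorem fund_subset (hn : 1 ≤ n) :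
    fund n ⊆ Metric.closedBall (0 : EuclideanSpace ℝ (Fin n)) n := by
  intro x hx
  rw [Metric.mem_closedBall, dist_zero_right, EuclideanSpace.norm_eq]
  have h1 : ∑ i, ‖x i‖ ^ 2 ≤ (n : ℝ) := by
    calc ∑ i, ‖x i‖ ^ 2 ≤ ∑ _i : Fin n, (1:ℝ) := by
          refine Finset.sum_le_sum fun i _ => ?_
          have := hx i
          rw [Real.norm_eq_abs, abs_of_nonneg this.1, sq]
          nlinarith [this.1, this.2]
      _ = n := by simp
  calc Real.sqrt (∑ i, ‖x i‖ ^ 2) ≤ Real.sqrt n := Real.sqrt_le_sqrt h1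
    _ ≤ n := by
        rw [Real.sqrt_le_left (by positivity)]
        have : (1:ℝ) ≤ n := by exact_mod_cast hn
        nlinarith

theorem fund_measurable : MeasurableSet (fund n) := by
  have : fund n = ⋂ i, (fun x : EuclideanSpace ℝ (Fin n) => x i) ⁻¹' Ico (0:ℝ) 1 := by
    ext x; simp [fund]
  rw [this]
  refine MeasurableSet.iInter fun i => ?_
  have hc : Continuous fun x : EuclideanSpace ℝ (Fin n) => x i :=
    (continuous_apply i).comp (EuclideanSpace.equiv (Fin n) ℝ).continuous
  exact hc.measurable measurableSet_Ico


end Stmt16Aux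

/-- Global `W²_1` identity on the torus for nonnegative data (Theorem `thm49`). -/
theorem stmt16 (n : ℕ) (hn : 1 ≤ n) (lam Lam : ℝ) (hlam : 0 < lam) (hLam : lam ≤ Lam)
    (τ : ℝ) (hτ : 0 < τ)
    (f u : EuclideanSpace ℝ (Fin n) → ℝ)
    (hfc : Continuous f) (hfp : ZPeriodic f) (hf0 : ∀ x, 0 ≤ f x)
    (hu : ContDiff ℝ 2 u) (hup : ZPeriodic u)
    (heq : ∀ x, τ * u x - pucciInf lam Lam (hess u x) = f x) :
    τ * (∫ x in fund n, |u x|) + (Lam - lam) / 2 * (∫ x in fund n, matAbs (hess u x)) =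
      ∫ x in fund n, f x := by
  obtain ⟨m, rfl⟩ : ∃ m, n = m + 1 := ⟨n - 1, (Nat.succ_pred_eq_of_pos hn).symm⟩
  set T : EuclideanSpace ℝ (Fin (m+1)) → ℝ := fun x => (hess u x).trace with hT
  have hTsum : T = fun x => ∑ i, fderiv ℝ (fderiv ℝ u) x
      (EuclideanSpace.single i 1) (EuclideanSpace.single i 1) := by
    funext x
    simp [hT, Matrix.trace, Matrix.diag, hess_apply hu]
  have hTc : Continuous T := by
    rw [hTsum]
    have hD2 : Continuous (fderiv ℝ (fderiv ℝ u)) :=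
      (hu.fderiv_right (m := 1) le_rfl).continuous_fderiv (by norm_num)
    exact continuous_finset_sum _ fun i _ =>
      (hD2.clm_apply continuous_const).clm_apply continuous_const
  have hK : IsCompact (Metric.closedBall (0 : EuclideanSpace ℝ (Fin (m+1))) (m+1)) :=
    isCompact_closedBall _ _
  have hsub : fund (m+1) ⊆ Metric.closedBall (0 : EuclideanSpace ℝ (Fin (m+1))) ((m:ℝ)+1) := by
    have h := fund_subset (n := m+1) hn
    exact_mod_cast h
  have hintf : IntegrableOn f (fund (m+1)) :=
    (hfc.continuousOn.integrableOn_compact hK).mono_set hsub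
  have hintu : IntegrableOn u (fund (m+1)) :=
    (hu.continuous.continuousOn.integrableOn_compact hK).mono_set hsub
  have hintT : IntegrableOn T (fund (m+1)) :=
    (hTc.continuousOn.integrableOn_compact hK).mono_set hsub
  have hpos : ∀ x, 0 ≤ u x := u_nonneg hn hlam hτ hf0 hu hup heq
  have hTz : ∫ x in fund (m+1), T x = 0 := by
    rw [hTsum]
    exact integral_trace_zero' hu hup
  have key : ∀ x, (Lam - lam)/2 * matAbs (hess u x)
      = f x - τ * u x + (lam + Lam)/2 * T x := by
    intro x
    have h1 := heq x
    rw [pucciInf_eq (hess_isHermitian hu x)] at h1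
    simp only [hT]
    linarith
  have habs : ∫ x in fund (m+1), |u x| = ∫ x in fund (m+1), u x :=
    setIntegral_congr_fun fund_measurable fun x _ => abs_of_nonneg (hpos x)
  have hS : (Lam - lam)/2 * ∫ x in fund (m+1), matAbs (hess u x)
      = (∫ x in fund (m+1), f x) - τ * (∫ x in fund (m+1), u x) := by
    rw [← integral_const_mul]
    rw [setIntegral_congr_fun fund_measurable fun x _ => key x]
    have h1 : IntegrableOn (fun x => f x - τ * u x) (fund (m+1)) := hintf.sub (hintu.const_mul τ)
    have h2 : IntegrableOn (fun x => (lam+Lam)/2 * T x) (fund (m+1)) := hintT.const_mul _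
    rw [integral_add h1 h2, integral_sub hintf (hintu.const_mul τ),
      integral_const_mul, integral_const_mul, hTz]
    ring
  rw [habs, hS]
  ring
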